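/- Let α, a, b > 0, let j ∈ ℕ, let z₀ ∈ ℝ, and let v be holomorphic on the half-plane {z ∈ ℂ : Re z > z₀} with |v(z)| ≤ e^{−α·Re z}(a + b|z|)^j for all such z. Then for every z with Re z > z₀: |∫₀^∞ v(z+t) dt| ≤ (1/α)·e^{−α·Re z}·Σ_{ν=0}^{j} (a+b|z|)^{j−ν}·(jb/α)^ν, and |∫₀^∞ ∫₀^∞ v(z+t+τ) dτ dt| ≤ (1/α²)·e^{−α·Re z}·Σ_{ν=0}^{j} Σ_{ℓ=0}^{j−ν} (jb/α)^ν·((j−ν)b/α)^ℓ·(a+b|z|)^{j−ν−ℓ}. -/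

import Mathlib

open Set MeasureTheory Finset


lemma powExp_integrableOn {α : ℝ} (hα : 0 < α) (n : ℕ) :
    IntegrableOn (fun t : ℝ => t ^ n * Real.exp (-α * t)) (Ioi 0) := by
  apply integrable_of_isBigO_exp_neg (half_pos hα) (by fun_prop)
  have hlo : (fun t : ℝ => t ^ n * Real.exp (-α * t)) =o[Filter.atTop]
      (fun t : ℝ => Real.exp (-(α/2) * t)) := by
    rw [Asymptotics.isLittleO_iff_tendsto (fun x hx => absurd hx (Real.exp_ne_zero _))]
    have h : ∀ t : ℝ, t ^ n * Real.exp (-α * t) / Real.exp (-(α/2) * t)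
        = ((α/2) * t) ^ n * Real.exp (-((α/2) * t)) * (2/α) ^ n := by
      intro t
      rw [mul_div_assoc, ← Real.exp_sub, mul_pow]
      rw [show -α * t - -(α/2) * t = -((α/2)*t) by ring]
      have h12 : (α/2)*(2/α) = 1 := by rw [div_mul_div_comm, mul_comm α 2, div_self (by positivity)]
      calc _ = t^n * Real.exp (-((α/2)*t)) * ((α/2)*(2/α))^n := by rw [h12]; ring
        _ = _ := by rw [mul_pow]; ring
    simp only [h]
    have h2 := ((Real.tendsto_pow_mul_exp_neg_atTop_nhds_zero n).comp
      (Filter.Tendsto.const_mul_atTop (half_pos hα) Filter.tendsto_id)).mul_const ((2/α) ^ n)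
    simpa using h2
  exact hlo.isBigO

lemma int_powExp {α : ℝ} (hα : 0 < α) (n : ℕ) :
    ∫ t in Ioi (0:ℝ), t ^ n * Real.exp (-α * t) = ((Nat.factorial n : ℕ) : ℝ) / α ^ (n + 1) := by
  have h := Real.integral_rpow_mul_exp_neg_mul_Ioi (a := (n : ℝ) + 1) (r := α)
    (by positivity) hα
  rw [show ((n:ℝ) + 1 - 1) = (n:ℝ) by ring] at h
  rw [show (∫ t in Ioi (0:ℝ), t ^ n * Real.exp (-α * t))
      = ∫ t in Ioi (0:ℝ), t ^ (n:ℝ) * Real.exp (-(α * t)) from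
    setIntegral_congr_fun measurableSet_Ioi (fun t ht => by
      rw [Real.rpow_natCast, neg_mul]), h]
  rw [show ((n:ℝ) + 1) = ((n + 1 : ℕ) : ℝ) by push_cast; ring, Real.rpow_natCast]
  rw [show ((n + 1 : ℕ) : ℝ) = (n:ℝ) + 1 by push_cast; ring, Real.Gamma_nat_eq_factorial]
  rw [div_pow, one_pow]
  ring

lemma expand_eq {α b A : ℝ} (n : ℕ) (t : ℝ) :
    Real.exp (-α * t) * (A + b * t) ^ n
      = ∑ k ∈ range (n + 1),
          ((n.choose k : ℝ) * A ^ (n - k) * b ^ k) * (t ^ k * Real.exp (-α * t)) := by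
  rw [add_comm A (b * t), add_pow, Finset.mul_sum]
  refine Finset.sum_congr rfl fun k hk => ?_
  rw [mul_pow]
  ring

lemma binomExp_integrableOn {α : ℝ} (b A : ℝ) (hα : 0 < α) (n : ℕ) :
    IntegrableOn (fun t : ℝ => Real.exp (-α * t) * (A + b * t) ^ n) (Ioi 0) := by
  have : (fun t : ℝ => Real.exp (-α * t) * (A + b * t) ^ n)
      = fun t => ∑ k ∈ range (n + 1),
          ((n.choose k : ℝ) * A ^ (n - k) * b ^ k) * (t ^ k * Real.exp (-α * t)) :=
    funext (expand_eq n)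
  rw [this]
  exact integrable_finset_sum _ fun k _ => ((powExp_integrableOn hα k).const_mul _)

lemma key_est {α b A : ℝ} (hα : 0 < α) (hb : 0 ≤ b) (hA : 0 ≤ A) (n : ℕ) :
    ∫ t in Ioi (0:ℝ), Real.exp (-α * t) * (A + b * t) ^ n
      ≤ (1 / α) * ∑ k ∈ range (n + 1), A ^ (n - k) * ((n : ℝ) * b / α) ^ k := by
  rw [show (∫ t in Ioi (0:ℝ), Real.exp (-α * t) * (A + b * t) ^ n)
      = ∫ t in Ioi (0:ℝ), ∑ k ∈ range (n + 1),
          ((n.choose k : ℝ) * A ^ (n - k) * b ^ k) * (t ^ k * Real.exp (-α * t)) from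
    by simp_rw [expand_eq n]]
  rw [integral_finset_sum _ fun k _ => ((powExp_integrableOn hα k).const_mul _)]
  rw [Finset.mul_sum]
  refine Finset.sum_le_sum fun k _ => ?_
  rw [MeasureTheory.integral_const_mul, int_powExp hα k]
  have hdesc : ((n.choose k : ℝ)) * (Nat.factorial k : ℝ) ≤ (n : ℝ) ^ k := by
    have h1 : n.choose k * Nat.factorial k ≤ n ^ k := by
      rw [mul_comm, ← Nat.descFactorial_eq_factorial_mul_choose]
      exact Nat.descFactorial_le_pow n k
    exact_mod_cast h1
  have hrhs : (1 / α) * (A ^ (n - k) * ((n : ℝ) * b / α) ^ k)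
      = A ^ (n - k) * b ^ k * ((n : ℝ) ^ k / α ^ (k + 1)) := by
    rw [div_pow, mul_pow]
    field_simp
    ring
  have hlhs : (n.choose k : ℝ) * A ^ (n - k) * b ^ k * ((Nat.factorial k : ℝ) / α ^ (k + 1))
      = A ^ (n - k) * b ^ k * (((n.choose k : ℝ) * (Nat.factorial k : ℝ)) / α ^ (k + 1)) := by
    ring
  rw [hlhs, hrhs]
  have hαp : (0:ℝ) < α ^ (k+1) := by positivity
  gcongr

lemma single_est (α a b : ℝ) (hα : 0 < α) (ha : 0 < a) (hb : 0 < b)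
    (j : ℕ) (z₀ : ℝ) (v : ℂ → ℂ)
    (hv : DifferentiableOn ℂ v {z : ℂ | z₀ < z.re})
    (hbd : ∀ z : ℂ, z₀ < z.re →
      ‖v z‖ ≤ Real.exp (-α * z.re) * (a + b * ‖z‖) ^ j)
    (z : ℂ) (hz : z₀ < z.re) :
    IntegrableOn (fun t : ℝ => v (z + (t:ℂ))) (Ioi 0) ∧
    ‖∫ t in Ioi (0:ℝ), v (z + (t:ℂ))‖ ≤
      (1 / α) * Real.exp (-α * z.re) *
        ∑ ν ∈ range (j + 1),
          (a + b * ‖z‖) ^ (j - ν) * ((j:ℝ) * b / α) ^ ν := by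
  set A : ℝ := a + b * ‖z‖ with hA_def
  have hA : 0 ≤ A := by positivity
  -- pointwise bound
  have hpt : ∀ t ∈ Ioi (0:ℝ), ‖v (z + (t:ℂ))‖ ≤
      Real.exp (-α * z.re) * (Real.exp (-α * t) * (A + b * t) ^ j) := by
    intro t ht
    have ht0 : (0:ℝ) < t := ht
    have hre : (z + (t:ℂ)).re = z.re + t := by simp
    have hmem : z₀ < (z + (t:ℂ)).re := by rw [hre]; linarith
    have h1 := hbd _ hmem
    refine h1.trans ?_
    rw [hre, show -α * (z.re + t) = -α * z.re + -α * t by ring, Real.exp_add, mul_assoc]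
    have habs : ‖z + (t:ℂ)‖ ≤ ‖z‖ + t := by
      calc ‖z + (t:ℂ)‖ ≤ ‖z‖ + ‖(t:ℂ)‖ :=
            norm_add_le _ _
        _ = ‖z‖ + t := by rw [Complex.norm_real, Real.norm_eq_abs, abs_of_pos ht0]
    have hpow : (a + b * ‖z + (t:ℂ)‖) ^ j ≤ (A + b * t) ^ j := by
      apply pow_le_pow_left₀ (by positivity)
      rw [hA_def]
      nlinarith [hb.le]
    have h2 : (0:ℝ) ≤ Real.exp (-α * z.re) * Real.exp (-α * t) := by positivity
    calc Real.exp (-α * z.re) * (Real.exp (-α * t) * (a + b * ‖z + (t:ℂ)‖) ^ j)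
        = Real.exp (-α * z.re) * Real.exp (-α * t) * (a + b * ‖z + (t:ℂ)‖) ^ j := by
          ring
      _ ≤ Real.exp (-α * z.re) * Real.exp (-α * t) * (A + b * t) ^ j :=
          mul_le_mul_of_nonneg_left hpow h2
      _ = Real.exp (-α * z.re) * (Real.exp (-α * t) * (A + b * t) ^ j) := by ring
  -- continuity / measurability
  have hcont : ContinuousOn (fun t : ℝ => v (z + (t:ℂ))) (Ioi 0) := by
    apply (hv.continuousOn).comp
    · exact Continuous.continuousOn (by continuity)
    · intro t ht
      simp only [mem_setOf_eq, Complex.add_re, Complex.ofReal_re]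
      exact lt_add_of_lt_of_pos hz ht
  have hBint : IntegrableOn
      (fun t : ℝ => Real.exp (-α * z.re) * (Real.exp (-α * t) * (A + b * t) ^ j))
      (Ioi 0) := (binomExp_integrableOn b A hα j).const_mul _
  have hint : IntegrableOn (fun t : ℝ => v (z + (t:ℂ))) (Ioi 0) := by
    refine Integrable.mono' hBint (hcont.aestronglyMeasurable measurableSet_Ioi) ?_
    exact (ae_restrict_iff' measurableSet_Ioi).2 (Filter.Eventually.of_forall hpt)
  refine ⟨hint, ?_⟩
  calc ‖∫ t in Ioi (0:ℝ), v (z + (t:ℂ))‖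
      ≤ ∫ t in Ioi (0:ℝ), ‖v (z + (t:ℂ))‖ := norm_integral_le_integral_norm _
    _ ≤ ∫ t in Ioi (0:ℝ),
          Real.exp (-α * z.re) * (Real.exp (-α * t) * (A + b * t) ^ j) :=
        setIntegral_mono_on hint.norm hBint measurableSet_Ioi hpt
    _ = Real.exp (-α * z.re) *
          ∫ t in Ioi (0:ℝ), Real.exp (-α * t) * (A + b * t) ^ j :=
        MeasureTheory.integral_const_mul _ _
    _ ≤ Real.exp (-α * z.re) *
          ((1 / α) * ∑ ν ∈ range (j + 1), A ^ (j - ν) * ((j:ℝ) * b / α) ^ ν) := by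
        gcongr
        exact key_est hα hb.le hA j
    _ = (1 / α) * Real.exp (-α * z.re) *
          ∑ ν ∈ range (j + 1), A ^ (j - ν) * ((j:ℝ) * b / α) ^ ν := by ring
/-- Complex-plane version of the iterated-integral estimates: for `v`
holomorphic on the half-plane `Re z > z₀` with
`|v(z)| ≤ e^{-α Re z}(a + b|z|)^j`, the integrals along rays parallel to the
positive real axis satisfy the stated bounds. -/
theorem stmt_4 (α a b : ℝ) (hα : 0 < α) (ha : 0 < a) (hb : 0 < b)
    (j : ℕ) (z₀ : ℝ) (v : ℂ → ℂ)
    (hv : DifferentiableOn ℂ v {z : ℂ | z₀ < z.re})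
    (hbd : ∀ z : ℂ, z₀ < z.re →
      ‖v z‖ ≤ Real.exp (-α * z.re) * (a + b * ‖z‖) ^ j) :
    ∀ z : ℂ, z₀ < z.re →
      (‖∫ t in Ioi (0:ℝ), v (z + (t : ℂ))‖ ≤
        (1 / α) * Real.exp (-α * z.re) *
          ∑ ν ∈ range (j + 1),
            (a + b * ‖z‖) ^ (j - ν) * ((j : ℝ) * b / α) ^ ν) ∧
      (‖∫ t in Ioi (0:ℝ), ∫ τ in Ioi (0:ℝ), v (z + (t : ℂ) + (τ : ℂ))‖ ≤
        (1 / α ^ 2) * Real.exp (-α * z.re) *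
          ∑ ν ∈ range (j + 1), ∑ ℓ ∈ range (j - ν + 1),
            ((j : ℝ) * b / α) ^ ν * (((j - ν : ℕ) : ℝ) * b / α) ^ ℓ *
              (a + b * ‖z‖) ^ (j - ν - ℓ)) := by
  intro z hz
  have hopen : IsOpen {w : ℂ | z₀ < w.re} := isOpen_lt continuous_const Complex.continuous_re
  set A : ℝ := a + b * ‖z‖ with hA_def
  have hA : 0 ≤ A := by positivity
  constructor
  · exact (single_est α a b hα ha hb j z₀ v hv hbd z hz).2
  -- Part 2
  set g : ℝ → ℂ := fun t => ∫ τ in Ioi (0:ℝ), v (z + (t:ℂ) + (τ:ℂ)) with hg_def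
  set B : ℝ → ℝ := fun t => ∑ ν ∈ range (j + 1),
      ((1/α) * Real.exp (-α * z.re) * ((j:ℝ) * b / α) ^ ν) *
        (Real.exp (-α * t) * (A + b * t) ^ (j - ν)) with hB_def
  -- pointwise bound on g
  have hgbd : ∀ t ∈ Ioi (0:ℝ), ‖g t‖ ≤ B t := by
    intro t ht
    have ht0 : (0:ℝ) < t := ht
    have hmem : z₀ < (z + (t:ℂ)).re := by
      simp only [Complex.add_re, Complex.ofReal_re]; linarith
    have h1 := (single_est α a b hα ha hb j z₀ v hv hbd (z + (t:ℂ)) hmem).2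
    have habs : ‖z + (t:ℂ)‖ ≤ ‖z‖ + t := by
      calc ‖z + (t:ℂ)‖ ≤ ‖z‖ + ‖(t:ℂ)‖ :=
            norm_add_le _ _
        _ = ‖z‖ + t := by rw [Complex.norm_real, Real.norm_eq_abs, abs_of_pos ht0]
    refine h1.trans ?_
    have hre : (z + (t:ℂ)).re = z.re + t := by simp
    rw [hre, show -α * (z.re + t) = -α * z.re + -α * t by ring, Real.exp_add]
    rw [hB_def]
    simp only [Finset.mul_sum]
    refine Finset.sum_le_sum fun ν _ => ?_
    have hpow : (a + b * ‖z + (t:ℂ)‖) ^ (j - ν) ≤ (A + b * t) ^ (j - ν) := by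
      apply pow_le_pow_left₀ (by positivity)
      rw [hA_def]; nlinarith [hb.le]
    calc (1/α) * (Real.exp (-α * z.re) * Real.exp (-α * t)) *
          ((a + b * ‖z + (t:ℂ)‖) ^ (j - ν) * ((j:ℝ) * b / α) ^ ν)
        = ((1/α) * Real.exp (-α * z.re) * Real.exp (-α * t) * ((j:ℝ) * b / α) ^ ν) *
            (a + b * ‖z + (t:ℂ)‖) ^ (j - ν) := by ring
      _ ≤ ((1/α) * Real.exp (-α * z.re) * Real.exp (-α * t) * ((j:ℝ) * b / α) ^ ν) *
            (A + b * t) ^ (j - ν) := by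
          apply mul_le_mul_of_nonneg_left hpow (by positivity)
      _ = (1/α) * Real.exp (-α * z.re) * ((j:ℝ) * b / α) ^ ν *
            (Real.exp (-α * t) * (A + b * t) ^ (j - ν)) := by ring
  -- integrability of B
  have hBint : IntegrableOn B (Ioi 0) := by
    rw [hB_def]
    exact integrable_finset_sum _ fun ν _ =>
      ((binomExp_integrableOn b A hα (j - ν)).const_mul _)
  -- continuity of g on Ioi 0
  have hgcont : ContinuousOn g (Ioi 0) := by
    intro t₀ ht₀
    have ht₀0 : (0:ℝ) < t₀ := ht₀
    refine ContinuousAt.continuousWithinAt ?_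
    set A' : ℝ := A + b * (t₀ + 1) with hA'_def
    apply MeasureTheory.continuousAt_of_dominated
      (bound := fun τ : ℝ => Real.exp (-α * z.re) * (Real.exp (-α * τ) * (A' + b * τ) ^ j))
    · filter_upwards [isOpen_Ioi.eventually_mem ht₀] with x hx
      have hmem : z₀ < (z + (x:ℂ)).re := by
        simp only [Complex.add_re, Complex.ofReal_re]
        exact lt_of_lt_of_le hz (by linarith [le_of_lt (show (0:ℝ) < x from hx)])
      exact (single_est α a b hα ha hb j z₀ v hv hbd (z + (x:ℂ)) hmem).1.aestronglyMeasurable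
    · have hoo : Ioo (0:ℝ) (t₀ + 1) ∈ nhds t₀ :=
        isOpen_Ioo.mem_nhds ⟨ht₀0, by linarith⟩
      filter_upwards [hoo] with x hx
      refine (ae_restrict_iff' measurableSet_Ioi).2 (Filter.Eventually.of_forall ?_)
      intro τ hτ
      have hτ0 : (0:ℝ) < τ := hτ
      have hre : (z + (x:ℂ) + (τ:ℂ)).re = z.re + x + τ := by simp
      have hmem : z₀ < (z + (x:ℂ) + (τ:ℂ)).re := by rw [hre]; linarith [hx.1]
      have h1 := hbd _ hmem
      refine h1.trans ?_
      have habs : ‖z + (x:ℂ) + (τ:ℂ)‖ ≤ ‖z‖ + x + τ := by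
        calc ‖z + (x:ℂ) + (τ:ℂ)‖
            ≤ ‖z + (x:ℂ)‖ + ‖(τ:ℂ)‖ := norm_add_le _ _
          _ ≤ (‖z‖ + ‖(x:ℂ)‖) + ‖(τ:ℂ)‖ := by
              gcongr; exact norm_add_le _ _
          _ = ‖z‖ + x + τ := by
              rw [Complex.norm_real, Real.norm_eq_abs, Complex.norm_real, Real.norm_eq_abs, abs_of_pos hx.1, abs_of_pos hτ0]
      have hpow : (a + b * ‖z + (x:ℂ) + (τ:ℂ)‖) ^ j ≤ (A' + b * τ) ^ j := by
        apply pow_le_pow_left₀ (by positivity)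
        rw [hA'_def, hA_def]
        nlinarith [hb.le, hx.2.le]
      have hexp : Real.exp (-α * (z + (x:ℂ) + (τ:ℂ)).re)
          ≤ Real.exp (-α * z.re) * Real.exp (-α * τ) := by
        rw [hre, ← Real.exp_add]
        apply Real.exp_le_exp.2
        nlinarith [hx.1.le, hα.le]
      calc Real.exp (-α * (z + (x:ℂ) + (τ:ℂ)).re) *
            (a + b * ‖z + (x:ℂ) + (τ:ℂ)‖) ^ j
          ≤ (Real.exp (-α * z.re) * Real.exp (-α * τ)) * (A' + b * τ) ^ j := by
            apply mul_le_mul hexp hpow (by positivity) (by positivity)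
        _ = Real.exp (-α * z.re) * (Real.exp (-α * τ) * (A' + b * τ) ^ j) := by ring
    · exact (binomExp_integrableOn b A' hα j).const_mul _
    · refine (ae_restrict_iff' measurableSet_Ioi).2 (Filter.Eventually.of_forall ?_)
      intro τ hτ
      have hτ0 : (0:ℝ) < τ := hτ
      have hmem : z + (t₀:ℂ) + (τ:ℂ) ∈ {w : ℂ | z₀ < w.re} := by
        simp only [mem_setOf_eq, Complex.add_re, Complex.ofReal_re]
        linarith
      have hd : DifferentiableAt ℂ v (z + (t₀:ℂ) + (τ:ℂ)) :=
        hv.differentiableAt (hopen.mem_nhds hmem)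
      have hc : ContinuousAt (fun x : ℝ => z + (x:ℂ) + (τ:ℂ)) t₀ := by fun_prop
      exact ContinuousAt.comp (g := v) (f := fun x : ℝ => z + (x:ℂ) + (τ:ℂ))
        hd.continuousAt hc
  -- integrability of g
  have hgint : IntegrableOn g (Ioi 0) := by
    refine Integrable.mono' hBint (hgcont.aestronglyMeasurable measurableSet_Ioi) ?_
    exact (ae_restrict_iff' measurableSet_Ioi).2 (Filter.Eventually.of_forall hgbd)
  calc ‖∫ t in Ioi (0:ℝ), g t‖
      ≤ ∫ t in Ioi (0:ℝ), ‖g t‖ := norm_integral_le_integral_norm _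
    _ ≤ ∫ t in Ioi (0:ℝ), B t :=
        setIntegral_mono_on hgint.norm hBint measurableSet_Ioi hgbd
    _ = ∑ ν ∈ range (j + 1),
          ((1/α) * Real.exp (-α * z.re) * ((j:ℝ) * b / α) ^ ν) *
            ∫ t in Ioi (0:ℝ), Real.exp (-α * t) * (A + b * t) ^ (j - ν) := by
        rw [hB_def, integral_finset_sum _ fun ν _ =>
          ((binomExp_integrableOn b A hα (j - ν)).const_mul _)]
        exact Finset.sum_congr rfl fun ν _ => MeasureTheory.integral_const_mul _ _
    _ ≤ ∑ ν ∈ range (j + 1),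
          ((1/α) * Real.exp (-α * z.re) * ((j:ℝ) * b / α) ^ ν) *
            ((1 / α) * ∑ ℓ ∈ range (j - ν + 1),
              A ^ (j - ν - ℓ) * (((j - ν : ℕ):ℝ) * b / α) ^ ℓ) := by
        refine Finset.sum_le_sum fun ν _ => ?_
        apply mul_le_mul_of_nonneg_left (key_est hα hb.le hA (j - ν)) (by positivity)
    _ = (1 / α ^ 2) * Real.exp (-α * z.re) *
          ∑ ν ∈ range (j + 1), ∑ ℓ ∈ range (j - ν + 1),
            ((j : ℝ) * b / α) ^ ν * (((j - ν : ℕ) : ℝ) * b / α) ^ ℓ *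
              A ^ (j - ν - ℓ) := by
        simp only [Finset.mul_sum]
        refine Finset.sum_congr rfl fun ν _ => ?_
        refine Finset.sum_congr rfl fun ℓ _ => ?_
        ring
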